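/- Fix b, B, b_x > 0, integers n, d, m ≥ 1, and suppose σ(z) = ∑_{j=1}^∞ a_j z^j converges for all |z| ≤ B·b_x, with σ̃(z) := ∑_{j=1}^∞ |a_j| z^j finite at z = B·b_x. Let H be the class of functions x ↦ uᵀσ(Wx) with u ∈ ℝ^n, ‖u‖ ≤ b, W ∈ ℝ^{n×d}, spectral norm ‖W‖ ≤ B (σ applied entrywise). Then the Rademacher complexity of H on any m points of Euclidean norm at most b_x is at most b·σ̃(B b_x)/√m. -/

import Mathlib

/-- Euclidean norm of a vector in `ℝ^d`. -/
noncomputable def euclNorm {d : ℕ} (x : Fin d → ℝ) : ℝ := Real.sqrt (∑ i, x i ^ 2)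

/-- Spectral norm of a matrix: `sup_{‖x‖=1} ‖Mx‖`. -/
noncomputable def specNorm {n d : ℕ} (M : Matrix (Fin n) (Fin d) ℝ) : ℝ :=
  sSup {r : ℝ | ∃ x : Fin d → ℝ, euclNorm x = 1 ∧ r = euclNorm (M.mulVec x)}

/-- Expectation over i.i.d. uniform `{-1,+1}` signs `ε : Fin m → ℝ`. -/
noncomputable def rademacherExp (m : ℕ) (f : (Fin m → ℝ) → ℝ) : ℝ :=
  (∑ ε : Fin m → Bool, f (fun i => if ε i then 1 else -1)) / 2 ^ m


open Finset

lemma reidx {j N : ℕ} (F : (Fin (j+1) → Fin N) → ℝ) :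
    ∑ g : Fin (j+1) → Fin N, F g = ∑ p : Fin N × (Fin j → Fin N), F (Fin.cons p.1 p.2) := by
  rw [← (Fin.consEquiv (fun _ => Fin N)).sum_comp F]; rfl

lemma expandPow {d j : ℕ} (v w : Fin d → ℝ) :
    (∑ t, v t * w t) ^ j = ∑ f : Fin j → Fin d, ∏ k, v (f k) * w (f k) := by
  rw [← Fintype.piFinset_univ, ← Finset.prod_univ_sum (fun _ => Finset.univ)
    (fun (_ : Fin j) t => v t * w t)]
  simp [Finset.prod_const]

lemma specpow {n d : ℕ} (B : ℝ) (W : Matrix (Fin n) (Fin d) ℝ)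
    (hW : ∀ y : Fin d → ℝ, ∑ g, (W.mulVec y g) ^ 2 ≤ B ^ 2 * ∑ t, (y t) ^ 2) :
    ∀ (j : ℕ) (T : (Fin j → Fin d) → ℝ),
      ∑ g : Fin j → Fin n, (∑ f : Fin j → Fin d, (∏ k, W (g k) (f k)) * T f) ^ 2
        ≤ (B ^ 2) ^ j * ∑ f : Fin j → Fin d, (T f) ^ 2 := by
  intro j
  induction j with
  | zero => intro T; simp
  | succ j ih =>
    intro T
    set U : Fin d → (Fin j → Fin d) → ℝ := fun f0 f' => T (Fin.cons f0 f') with hU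
    set Sm : Fin d → (Fin j → Fin n) → ℝ :=
      fun f0 g' => ∑ f' : Fin j → Fin d, (∏ k, W (g' k) (f' k)) * U f0 f' with hSm
    have inner_eq : ∀ (g0 : Fin n) (g' : Fin j → Fin n),
        (∑ f : Fin (j+1) → Fin d, (∏ k, W ((Fin.cons g0 g' : Fin (j+1) → Fin n) k) (f k)) * T f)
          = ∑ f0 : Fin d, W g0 f0 * Sm f0 g' := by
      intro g0 g'
      rw [reidx (fun f => (∏ k, W ((Fin.cons g0 g' : Fin (j+1) → Fin n) k) (f k)) * T f)]
      rw [Fintype.sum_prod_type]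
      refine Finset.sum_congr rfl fun f0 _ => ?_
      rw [hSm, Finset.mul_sum]
      refine Finset.sum_congr rfl fun f' _ => ?_
      rw [Fin.prod_univ_succ]
      simp [mul_assoc, hU]
    calc ∑ g : Fin (j+1) → Fin n, (∑ f : Fin (j+1) → Fin d, (∏ k, W (g k) (f k)) * T f) ^ 2
        = ∑ p : Fin n × (Fin j → Fin n),
            (∑ f0 : Fin d, W p.1 f0 * Sm f0 p.2) ^ 2 := by
          rw [reidx (fun g => (∑ f : Fin (j+1) → Fin d, (∏ k, W (g k) (f k)) * T f) ^ 2)]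
          exact Finset.sum_congr rfl fun p _ => by rw [inner_eq p.1 p.2]
      _ = ∑ g' : Fin j → Fin n, ∑ g0 : Fin n, (W.mulVec (fun f0 => Sm f0 g') g0) ^ 2 := by
          rw [Fintype.sum_prod_type_right]
          rfl
      _ ≤ ∑ g' : Fin j → Fin n, B ^ 2 * ∑ f0 : Fin d, (Sm f0 g') ^ 2 :=
          Finset.sum_le_sum fun g' _ => hW _
      _ = B ^ 2 * ∑ f0 : Fin d, ∑ g' : Fin j → Fin n, (Sm f0 g') ^ 2 := by
          rw [← Finset.mul_sum, Finset.sum_comm]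
      _ ≤ B ^ 2 * ∑ f0 : Fin d, (B ^ 2) ^ j * ∑ f' : Fin j → Fin d, (U f0 f') ^ 2 := by
          refine mul_le_mul_of_nonneg_left (Finset.sum_le_sum fun f0 _ => ih (U f0)) (sq_nonneg B)
      _ = (B ^ 2) ^ (j+1) * ∑ f : Fin (j+1) → Fin d, (T f) ^ 2 := by
          rw [reidx (fun f => (T f) ^ 2), Fintype.sum_prod_type, ← Finset.mul_sum, pow_succ]
          ring


noncomputable def Svec (d m j : ℕ) (x : Fin m → Fin d → ℝ) (ε : Fin m → ℝ) : ℝ :=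
  Real.sqrt (∑ f : Fin j → Fin d, (∑ i, ε i * ∏ k, x i (f k)) ^ 2)

lemma svec_nonneg (d m j : ℕ) (x : Fin m → Fin d → ℝ) (ε : Fin m → ℝ) :
    0 ≤ Svec d m j x ε := Real.sqrt_nonneg _

lemma expandPow' {d j : ℕ} (v w : Fin d → ℝ) :
    (∑ t, v t * w t) ^ j = ∑ f : Fin j → Fin d, ∏ k, v (f k) * w (f k) := by
  rw [← Fintype.piFinset_univ, ← Finset.prod_univ_sum (fun _ => Finset.univ)
    (fun (_ : Fin j) t => v t * w t)]
  simp [Finset.prod_const]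

-- norm of rank-one tensor
lemma tens_sq_sum {d j : ℕ} (v : Fin d → ℝ) :
    ∑ f : Fin j → Fin d, (∏ k, v (f k)) ^ 2 = (∑ t, v t ^ 2) ^ j := by
  rw [show (fun t => v t ^ 2) = fun t => v t * v t by funext t; ring, expandPow']
  refine Finset.sum_congr rfl fun f _ => ?_
  rw [sq, ← Finset.prod_mul_distrib]

lemma svec_le (d m j : ℕ) (bx : ℝ) (hbx : 0 ≤ bx) (x : Fin m → Fin d → ℝ)
    (hx : ∀ i, Real.sqrt (∑ t, x i t ^ 2) ≤ bx) (ε : Fin m → ℝ) :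
    Svec d m j x ε ≤ (∑ i, |ε i|) * bx ^ j := by
  classical
  set q : Fin m → EuclideanSpace ℝ (Fin j → Fin d) := fun i => WithLp.toLp 2 (fun f => ∏ k, x i (f k)) with hq
  have hnq : ∀ i, ‖q i‖ ≤ bx ^ j := by
    intro i
    rw [EuclideanSpace.norm_eq]
    have : ∀ f : Fin j → Fin d, ‖q i f‖ ^ 2 = (∏ k, x i (f k)) ^ 2 := by
      intro f; rw [Real.norm_eq_abs, sq_abs]
    rw [Finset.sum_congr rfl fun f _ => this f, tens_sq_sum]
    rw [show ((∑ t, x i t ^ 2) ^ j) = ((Real.sqrt (∑ t, x i t ^2)) ^ 2) ^ j by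
      rw [Real.sq_sqrt (by positivity)], ← pow_mul, mul_comm 2 j, pow_mul,
      Real.sqrt_sq (by positivity)]
    exact pow_le_pow_left₀ (Real.sqrt_nonneg _) (hx i) j
  have key : Svec d m j x ε = ‖∑ i, ε i • q i‖ := by
    rw [EuclideanSpace.norm_eq, Svec]
    congr 1
    refine Finset.sum_congr rfl fun f _ => ?_
    have : (∑ i, ε i • q i) f = ∑ i, ε i * q i f := by
      rw [WithLp.ofLp_sum, Finset.sum_apply]; exact Finset.sum_congr rfl fun i _ => rfl
    rw [this, Real.norm_eq_abs, sq_abs]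
  rw [key]
  calc ‖∑ i, ε i • q i‖ ≤ ∑ i, ‖ε i • q i‖ := norm_sum_le _ _
    _ = ∑ i, |ε i| * ‖q i‖ := by
        refine Finset.sum_congr rfl fun i _ => ?_
        rw [norm_smul, Real.norm_eq_abs]
    _ ≤ ∑ i, |ε i| * bx ^ j := Finset.sum_le_sum fun i _ =>
        mul_le_mul_of_nonneg_left (hnq i) (abs_nonneg _)
    _ = (∑ i, |ε i|) * bx ^ j := by rw [Finset.sum_mul]

lemma diag_le {n d j : ℕ} (hj : 1 ≤ j) (W : Matrix (Fin n) (Fin d) ℝ)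
    (T : (Fin j → Fin d) → ℝ) :
    ∑ l : Fin n, (∑ f : Fin j → Fin d, (∏ k, W l (f k)) * T f) ^ 2
      ≤ ∑ g : Fin j → Fin n, (∑ f : Fin j → Fin d, (∏ k, W (g k) (f k)) * T f) ^ 2 := by
  classical
  set F : (Fin j → Fin n) → ℝ := fun g => (∑ f : Fin j → Fin d, (∏ k, W (g k) (f k)) * T f) ^ 2
    with hF
  have hinj : ∀ l ∈ (Finset.univ : Finset (Fin n)), ∀ l' ∈ (Finset.univ : Finset (Fin n)),
      (fun (_ : Fin j) => l) = (fun (_ : Fin j) => l') → l = l' := by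
    intro l _ l' _ h
    have := congrFun h ⟨0, hj⟩
    exact this
  have h1 : ∑ g ∈ Finset.image (fun l (_ : Fin j) => l) (Finset.univ : Finset (Fin n)), F g
      = ∑ l : Fin n, F (fun _ => l) := Finset.sum_image hinj
  have h2 : ∑ g ∈ Finset.image (fun l (_ : Fin j) => l) (Finset.univ : Finset (Fin n)), F g
      ≤ ∑ g : Fin j → Fin n, F g :=
    Finset.sum_le_sum_of_subset_of_nonneg (Finset.subset_univ _) (fun g _ _ => sq_nonneg _)
  rw [← h1] at *
  exact h2

lemma claimD {n d m : ℕ} (b B : ℝ) (hb : 0 ≤ b) (hB : 0 ≤ B)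
    (x : Fin m → Fin d → ℝ) (ε : Fin m → ℝ)
    (u : Fin n → ℝ) (hu : ∑ l, u l ^ 2 ≤ b ^ 2)
    (W : Matrix (Fin n) (Fin d) ℝ)
    (hW : ∀ y : Fin d → ℝ, ∑ g, (W.mulVec y g) ^ 2 ≤ B ^ 2 * ∑ t, (y t) ^ 2)
    (j : ℕ) (hj : 1 ≤ j) :
    |∑ i, ε i * ∑ l, u l * (W.mulVec (x i) l) ^ j| ≤ b * B ^ j * Svec d m j x ε := by
  classical
  set T : (Fin j → Fin d) → ℝ := fun f => ∑ i, ε i * ∏ k, x i (f k) with hT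
  set v : Fin n → ℝ := fun l => ∑ f : Fin j → Fin d, (∏ k, W l (f k)) * T f with hv
  have hrearr : ∑ i, ε i * ∑ l, u l * (W.mulVec (x i) l) ^ j = ∑ l, u l * v l := by
    have hz : ∀ (i : Fin m) (l : Fin n),
        (W.mulVec (x i) l) ^ j = ∑ f : Fin j → Fin d, (∏ k, W l (f k)) * ∏ k, x i (f k) := by
      intro i l
      have : W.mulVec (x i) l = ∑ t, W l t * x i t := rfl
      rw [this, expandPow']
      exact Finset.sum_congr rfl fun f _ => Finset.prod_mul_distrib
    calc ∑ i, ε i * ∑ l, u l * (W.mulVec (x i) l) ^ j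
        = ∑ i, ∑ l, ∑ f : Fin j → Fin d,
            u l * (∏ k, W l (f k)) * (ε i * ∏ k, x i (f k)) := by
          refine Finset.sum_congr rfl fun i _ => ?_
          rw [Finset.mul_sum]
          refine Finset.sum_congr rfl fun l _ => ?_
          rw [hz, Finset.mul_sum, Finset.mul_sum]
          refine Finset.sum_congr rfl fun f _ => by ring
      _ = ∑ l, ∑ f : Fin j → Fin d, ∑ i,
            u l * (∏ k, W l (f k)) * (ε i * ∏ k, x i (f k)) := by
          rw [Finset.sum_comm]
          exact Finset.sum_congr rfl fun l _ => Finset.sum_comm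
      _ = ∑ l, u l * v l := by
          refine Finset.sum_congr rfl fun l _ => ?_
          rw [hv, Finset.mul_sum]
          refine Finset.sum_congr rfl fun f _ => ?_
          rw [← Finset.mul_sum, hT]
          ring
  rw [hrearr]
  have hsq : (∑ l, u l * v l) ^ 2 ≤ (b * B ^ j * Svec d m j x ε) ^ 2 := by
    have hcs := Finset.sum_mul_sq_le_sq_mul_sq Finset.univ u v
    have hvb : ∑ l, v l ^ 2 ≤ (B ^ 2) ^ j * ∑ f : Fin j → Fin d, (T f) ^ 2 :=
      le_trans (diag_le hj W T) (specpow B W hW j T)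
    have hS : (Svec d m j x ε) ^ 2 = ∑ f : Fin j → Fin d, (T f) ^ 2 := by
      rw [Svec, Real.sq_sqrt (Finset.sum_nonneg fun f _ => sq_nonneg _)]
    calc (∑ l, u l * v l) ^ 2 ≤ (∑ l, u l ^ 2) * ∑ l, v l ^ 2 := hcs
      _ ≤ b ^ 2 * ((B ^ 2) ^ j * ∑ f : Fin j → Fin d, (T f) ^ 2) := by
          refine mul_le_mul hu hvb (Finset.sum_nonneg fun l _ => sq_nonneg _) (sq_nonneg b)
      _ = (b * B ^ j * Svec d m j x ε) ^ 2 := by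
          rw [← hS]; ring
  have hrhs : 0 ≤ b * B ^ j * Svec d m j x ε :=
    mul_nonneg (by positivity) (svec_nonneg _ _ _ _ _)
  calc |∑ l, u l * v l| = Real.sqrt ((∑ l, u l * v l) ^ 2) := (Real.sqrt_sq_eq_abs _).symm
    _ ≤ Real.sqrt ((b * B ^ j * Svec d m j x ε) ^ 2) := Real.sqrt_le_sqrt hsq
    _ = b * B ^ j * Svec d m j x ε := Real.sqrt_sq hrhs

lemma perEps {n d m : ℕ} (b B bx : ℝ) (hb : 0 ≤ b) (hB : 0 ≤ B) (hbx : 0 ≤ bx)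
    (a : ℕ → ℝ) (ha0 : a 0 = 0) (σ : ℝ → ℝ)
    (hσ : ∀ z : ℝ, |z| ≤ B * bx → HasSum (fun j : ℕ => a j * z ^ j) (σ z))
    (hsum : Summable fun j : ℕ => |a j| * (B * bx) ^ j)
    (x : Fin m → Fin d → ℝ) (hx : ∀ i, Real.sqrt (∑ t, x i t ^ 2) ≤ bx)
    (ε : Fin m → ℝ)
    (u : Fin n → ℝ) (hu : ∑ l, u l ^ 2 ≤ b ^ 2)
    (W : Matrix (Fin n) (Fin d) ℝ)
    (hW : ∀ y : Fin d → ℝ, ∑ g, (W.mulVec y g) ^ 2 ≤ B ^ 2 * ∑ t, (y t) ^ 2) :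
    ∑ i, ε i * ∑ l, u l * σ (W.mulVec (x i) l)
      ≤ b * ∑' j : ℕ, |a j| * B ^ j * Svec d m j x ε := by
  classical
  set z : Fin m → Fin n → ℝ := fun i l => W.mulVec (x i) l with hzdef
  have hz : ∀ i l, |z i l| ≤ B * bx := by
    intro i l
    have h1 : |z i l| = Real.sqrt ((z i l) ^ 2) := (Real.sqrt_sq_eq_abs _).symm
    have h2 : (z i l) ^ 2 ≤ ∑ g, (W.mulVec (x i) g) ^ 2 :=
      Finset.single_le_sum (f := fun g => (W.mulVec (x i) g) ^ 2)
        (fun g _ => sq_nonneg _) (Finset.mem_univ l)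
    have h3 : Real.sqrt (B ^ 2 * ∑ t, (x i t) ^ 2)
        = B * Real.sqrt (∑ t, (x i t) ^ 2) := by
      rw [Real.sqrt_mul (sq_nonneg B), Real.sqrt_sq hB]
    calc |z i l| = Real.sqrt ((z i l) ^ 2) := h1
      _ ≤ Real.sqrt (B ^ 2 * ∑ t, (x i t) ^ 2) :=
          Real.sqrt_le_sqrt (le_trans h2 (hW (x i)))
      _ = B * Real.sqrt (∑ t, (x i t) ^ 2) := h3
      _ ≤ B * bx := mul_le_mul_of_nonneg_left (hx i) hB
  have hsz : ∀ w : ℝ, |w| ≤ B * bx → Summable (fun j => a j * w ^ j) := by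
    intro w hw
    refine Summable.of_abs (Summable.of_nonneg_of_le (fun j => abs_nonneg _) (fun j => ?_) hsum)
    rw [abs_mul, abs_pow]
    exact mul_le_mul_of_nonneg_left (pow_le_pow_left₀ (abs_nonneg w) hw j) (abs_nonneg _)
  have hsz' : ∀ i l, Summable (fun j => ε i * (u l * (a j * z i l ^ j))) := fun i l =>
    ((hsz _ (hz i l)).mul_left _).mul_left _
  have hi : ∀ i, ε i * ∑ l, u l * σ (z i l)
      = ∑' j : ℕ, ∑ l, ε i * (u l * (a j * z i l ^ j)) := by
    intro i
    have e1 : ∀ l, u l * σ (z i l) = ∑' j : ℕ, u l * (a j * z i l ^ j) := fun l => by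
      rw [← (hσ _ (hz i l)).tsum_eq, tsum_mul_left]
    calc ε i * ∑ l, u l * σ (z i l)
        = ε i * ∑ l, ∑' j : ℕ, u l * (a j * z i l ^ j) := by
          rw [Finset.sum_congr rfl fun l _ => e1 l]
      _ = ε i * ∑' j : ℕ, ∑ l, u l * (a j * z i l ^ j) := by
          rw [Summable.tsum_finsetSum (fun l _ => (hsz _ (hz i l)).mul_left _)]
      _ = ∑' j : ℕ, ε i * ∑ l, u l * (a j * z i l ^ j) := tsum_mul_left.symm
      _ = ∑' j : ℕ, ∑ l, ε i * (u l * (a j * z i l ^ j)) := by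
          congr 1; funext j; rw [Finset.mul_sum]
  have stepA : ∑ i, ε i * ∑ l, u l * σ (z i l)
      = ∑' j : ℕ, ∑ i, ∑ l, ε i * (u l * (a j * z i l ^ j)) := by
    rw [Finset.sum_congr rfl fun i _ => hi i]
    exact (Summable.tsum_finsetSum (fun i _ => summable_sum (fun l _ => hsz' i l))).symm
  have claimSvec : ∀ j, Svec d m j x ε ≤ (∑ i, |ε i|) * bx ^ j := fun j =>
    svec_le d m j bx hbx x hx ε
  have sumR : Summable (fun j => b * (|a j| * B ^ j * Svec d m j x ε)) := by
    refine Summable.of_nonneg_of_le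
      (fun j => mul_nonneg hb (mul_nonneg (mul_nonneg (abs_nonneg _) (pow_nonneg hB _))
        (svec_nonneg _ _ _ _ _)))
      (fun j => ?_) (hsum.mul_left (b * (∑ i, |ε i|)))
    have : |a j| * B ^ j * Svec d m j x ε ≤ (∑ i, |ε i|) * (|a j| * (B * bx) ^ j) := by
      rw [mul_pow]
      calc |a j| * B ^ j * Svec d m j x ε
          ≤ |a j| * B ^ j * ((∑ i, |ε i|) * bx ^ j) := by
            refine mul_le_mul_of_nonneg_left (claimSvec j)
              (mul_nonneg (abs_nonneg _) (pow_nonneg hB _))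
        _ = (∑ i, |ε i|) * (|a j| * (B ^ j * bx ^ j)) := by ring
    calc b * (|a j| * B ^ j * Svec d m j x ε)
        ≤ b * ((∑ i, |ε i|) * (|a j| * (B * bx) ^ j)) := mul_le_mul_of_nonneg_left this hb
      _ = b * (∑ i, |ε i|) * (|a j| * (B * bx) ^ j) := by ring
  have sumL : Summable (fun j => ∑ i, ∑ l, ε i * (u l * (a j * z i l ^ j))) :=
    summable_sum (fun i _ => summable_sum (fun l _ => hsz' i l))
  have term : ∀ j, ∑ i, ∑ l, ε i * (u l * (a j * z i l ^ j))
      ≤ b * (|a j| * B ^ j * Svec d m j x ε) := by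
    intro j
    rcases Nat.eq_zero_or_pos j with hj | hj
    · subst hj
      have : ∑ i, ∑ l, ε i * (u l * (a 0 * z i l ^ 0)) = 0 := by
        simp [ha0]
      rw [this]
      exact mul_nonneg hb (mul_nonneg (mul_nonneg (abs_nonneg _) (pow_nonneg hB _))
        (svec_nonneg _ _ _ _ _))
    · have hD := claimD b B hb hB x ε u hu W hW j hj
      have heq : ∑ i, ∑ l, ε i * (u l * (a j * z i l ^ j))
          = a j * ∑ i, ε i * ∑ l, u l * z i l ^ j := by
        rw [Finset.mul_sum]
        refine Finset.sum_congr rfl fun i _ => ?_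
        rw [Finset.mul_sum, Finset.mul_sum]
        exact Finset.sum_congr rfl fun l _ => by ring
      rw [heq]
      calc a j * ∑ i, ε i * ∑ l, u l * z i l ^ j
          ≤ |a j * ∑ i, ε i * ∑ l, u l * z i l ^ j| := le_abs_self _
        _ = |a j| * |∑ i, ε i * ∑ l, u l * z i l ^ j| := abs_mul _ _
        _ ≤ |a j| * (b * B ^ j * Svec d m j x ε) :=
            mul_le_mul_of_nonneg_left hD (abs_nonneg _)
        _ = b * (|a j| * B ^ j * Svec d m j x ε) := by ring
  calc ∑ i, ε i * ∑ l, u l * σ (z i l)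
      = ∑' j : ℕ, ∑ i, ∑ l, ε i * (u l * (a j * z i l ^ j)) := stepA
    _ ≤ ∑' j : ℕ, b * (|a j| * B ^ j * Svec d m j x ε) := Summable.tsum_le_tsum term sumL sumR
    _ = b * ∑' j : ℕ, |a j| * B ^ j * Svec d m j x ε := tsum_mul_left

lemma orth {m : ℕ} (i i' : Fin m) (h : i ≠ i') :
    ∑ ε : Fin m → Bool, ((if ε i then (1:ℝ) else -1) * (if ε i' then (1:ℝ) else -1)) = 0 := by
  classical
  set F : (Fin m → Bool) → ℝ :=
    fun ε => (if ε i then (1:ℝ) else -1) * (if ε i' then (1:ℝ) else -1) with hF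
  have hinv : Function.Involutive (fun ε : Fin m → Bool => Function.update ε i (!ε i)) := by
    intro ε
    funext k
    by_cases hk : k = i
    · subst hk; simp
    · simp [Function.update_of_ne hk]
  have hperm := hinv.toPerm
  have hsum : ∑ ε : Fin m → Bool, F (Function.update ε i (!ε i)) = ∑ ε : Fin m → Bool, F ε :=
    Equiv.sum_comp hinv.toPerm F
  have hneg : ∀ ε : Fin m → Bool, F (Function.update ε i (!ε i)) = -F ε := by
    intro ε
    rw [hF]
    simp only [Function.update_self, Function.update_of_ne (Ne.symm h)]
    cases hεi : ε i <;> cases hεi' : ε i' <;> simp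
  rw [Finset.sum_congr rfl (fun ε _ => hneg ε), Finset.sum_neg_distrib] at hsum
  linarith

lemma card_signs (m : ℕ) : (Finset.univ : Finset (Fin m → Bool)).card = 2 ^ m := by
  simp [Finset.card_univ]

lemma sumsq {m : ℕ} (v : Fin m → ℝ) :
    ∑ ε : Fin m → Bool, (∑ i, (if ε i then (1:ℝ) else -1) * v i) ^ 2
      = 2 ^ m * ∑ i, v i ^ 2 := by
  classical
  set c : (Fin m → Bool) → Fin m → ℝ := fun ε i => if ε i then (1:ℝ) else -1 with hc
  have expand : ∀ ε : Fin m → Bool, (∑ i, c ε i * v i) ^ 2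
      = ∑ i, ∑ i', (c ε i * c ε i') * (v i * v i') := by
    intro ε
    rw [sq, Finset.sum_mul_sum]
    exact Finset.sum_congr rfl fun i _ => Finset.sum_congr rfl fun i' _ => by ring
  calc ∑ ε : Fin m → Bool, (∑ i, c ε i * v i) ^ 2
      = ∑ ε : Fin m → Bool, ∑ i, ∑ i', (c ε i * c ε i') * (v i * v i') :=
        Finset.sum_congr rfl fun ε _ => expand ε
    _ = ∑ i, ∑ i', (∑ ε : Fin m → Bool, c ε i * c ε i') * (v i * v i') := by
        rw [Finset.sum_comm]
        refine Finset.sum_congr rfl fun i _ => ?_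
        rw [Finset.sum_comm]
        refine Finset.sum_congr rfl fun i' _ => ?_
        rw [Finset.sum_mul]
    _ = ∑ i, ∑ i', (if i = i' then (2:ℝ) ^ m else 0) * (v i * v i') := by
        refine Finset.sum_congr rfl fun i _ => Finset.sum_congr rfl fun i' _ => ?_
        congr 1
        by_cases hii : i = i'
        · subst hii
          simp only [if_pos rfl]
          have : ∀ ε : Fin m → Bool, c ε i * c ε i = 1 := by
            intro ε; rw [hc]; cases hεi : ε i <;> simp [hεi] <;> norm_num
          rw [Finset.sum_congr rfl fun ε _ => this ε, Finset.sum_const, card_signs]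
          simp
        · rw [if_neg hii]
          exact orth i i' hii
    _ = ∑ i, (2:ℝ) ^ m * (v i * v i) := by
        refine Finset.sum_congr rfl fun i _ => ?_
        simp [ite_mul, Finset.sum_ite_eq]
    _ = 2 ^ m * ∑ i, v i ^ 2 := by
        rw [Finset.mul_sum]
        exact Finset.sum_congr rfl fun i _ => by ring

lemma summable_svec {d m : ℕ} (B bx : ℝ) (hB : 0 ≤ B) (hbx : 0 ≤ bx) (a : ℕ → ℝ)
    (hsum : Summable fun j : ℕ => |a j| * (B * bx) ^ j)
    (x : Fin m → Fin d → ℝ) (hx : ∀ i, Real.sqrt (∑ t, x i t ^ 2) ≤ bx)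
    (ε : Fin m → ℝ) :
    Summable (fun j => |a j| * B ^ j * Svec d m j x ε) := by
  refine Summable.of_nonneg_of_le
    (fun j => mul_nonneg (mul_nonneg (abs_nonneg _) (pow_nonneg hB _)) (svec_nonneg _ _ _ _ _))
    (fun j => ?_) (hsum.mul_left (∑ i, |ε i|))
  rw [mul_pow]
  calc |a j| * B ^ j * Svec d m j x ε
      ≤ |a j| * B ^ j * ((∑ i, |ε i|) * bx ^ j) :=
        mul_le_mul_of_nonneg_left (svec_le d m j bx hbx x hx ε)
          (mul_nonneg (abs_nonneg _) (pow_nonneg hB _))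
    _ = (∑ i, |ε i|) * (|a j| * (B ^ j * bx ^ j)) := by ring

lemma EStep {d m : ℕ} (j : ℕ) (bx : ℝ) (hbx : 0 ≤ bx)
    (x : Fin m → Fin d → ℝ) (hx : ∀ i, Real.sqrt (∑ t, x i t ^ 2) ≤ bx) :
    ∑ ε : Fin m → Bool, Svec d m j x (fun i => if ε i then 1 else -1)
      ≤ 2 ^ m * (Real.sqrt m * bx ^ j) := by
  classical
  set S : (Fin m → Bool) → ℝ := fun ε => Svec d m j x (fun i => if ε i then 1 else -1) with hS
  have hA0 : (0:ℝ) ≤ ∑ ε, S ε := Finset.sum_nonneg fun ε _ => svec_nonneg _ _ _ _ _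
  have hcs := Finset.sum_mul_sq_le_sq_mul_sq Finset.univ (fun _ : Fin m → Bool => (1:ℝ)) S
  simp only [one_mul, one_pow] at hcs
  rw [Finset.sum_const, card_signs, nsmul_eq_mul, mul_one] at hcs
  push_cast at hcs
  have hS2 : ∑ ε : Fin m → Bool, (S ε) ^ 2 = 2 ^ m * ∑ i, (∑ t, x i t ^ 2) ^ j := by
    have h1 : ∀ ε : Fin m → Bool, (S ε) ^ 2
        = ∑ f : Fin j → Fin d, (∑ i, (if ε i then (1:ℝ) else -1) * ∏ k, x i (f k)) ^ 2 := by
      intro ε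
      simp only [hS, Svec]
      rw [Real.sq_sqrt (Finset.sum_nonneg fun f _ => sq_nonneg _)]
    calc ∑ ε : Fin m → Bool, (S ε) ^ 2
        = ∑ f : Fin j → Fin d, ∑ ε : Fin m → Bool,
            (∑ i, (if ε i then (1:ℝ) else -1) * ∏ k, x i (f k)) ^ 2 := by
          rw [← Finset.sum_comm]
          exact Finset.sum_congr rfl fun ε _ => h1 ε
      _ = ∑ f : Fin j → Fin d, 2 ^ m * ∑ i, (∏ k, x i (f k)) ^ 2 :=
          Finset.sum_congr rfl fun f _ => sumsq _
      _ = 2 ^ m * ∑ i, ∑ f : Fin j → Fin d, (∏ k, x i (f k)) ^ 2 := by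
          rw [← Finset.mul_sum, Finset.sum_comm]
      _ = 2 ^ m * ∑ i, (∑ t, x i t ^ 2) ^ j := by
          rw [Finset.sum_congr rfl fun i _ => tens_sq_sum (x i)]
  have hxb : ∀ i : Fin m, (∑ t, x i t ^ 2) ^ j ≤ (bx ^ 2) ^ j := by
    intro i
    refine pow_le_pow_left₀ (Finset.sum_nonneg fun t _ => sq_nonneg _) ?_ j
    calc ∑ t, x i t ^ 2 = (Real.sqrt (∑ t, x i t ^ 2)) ^ 2 :=
          (Real.sq_sqrt (Finset.sum_nonneg fun t _ => sq_nonneg _)).symm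
      _ ≤ bx ^ 2 := pow_le_pow_left₀ (Real.sqrt_nonneg _) (hx i) 2
  have hsum_i : ∑ i : Fin m, (∑ t, x i t ^ 2) ^ j ≤ m * (bx ^ 2) ^ j := by
    calc ∑ i : Fin m, (∑ t, x i t ^ 2) ^ j ≤ ∑ _i : Fin m, (bx ^ 2) ^ j :=
          Finset.sum_le_sum fun i _ => hxb i
      _ = m * (bx ^ 2) ^ j := by rw [Finset.sum_const]; simp [mul_comm]
  have hsq : (∑ ε, S ε) ^ 2 ≤ (2 ^ m * (Real.sqrt m * bx ^ j)) ^ 2 := by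
    calc (∑ ε, S ε) ^ 2 ≤ 2 ^ m * ∑ ε : Fin m → Bool, (S ε) ^ 2 := hcs
      _ = 2 ^ m * (2 ^ m * ∑ i, (∑ t, x i t ^ 2) ^ j) := by rw [hS2]
      _ ≤ 2 ^ m * (2 ^ m * (m * (bx ^ 2) ^ j)) := by
          refine mul_le_mul_of_nonneg_left (mul_le_mul_of_nonneg_left hsum_i (by positivity))
            (by positivity)
      _ = (2 ^ m * (Real.sqrt m * bx ^ j)) ^ 2 := by
          rw [mul_pow, mul_pow, Real.sq_sqrt (Nat.cast_nonneg m)]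
          ring
  calc ∑ ε, S ε = Real.sqrt ((∑ ε, S ε) ^ 2) := (Real.sqrt_sq hA0).symm
    _ ≤ Real.sqrt ((2 ^ m * (Real.sqrt m * bx ^ j)) ^ 2) := Real.sqrt_le_sqrt hsq
    _ = 2 ^ m * (Real.sqrt m * bx ^ j) := Real.sqrt_sq (by positivity)

lemma specNorm_bound {n d : ℕ} (B : ℝ) (hB : 0 ≤ B) (W : Matrix (Fin n) (Fin d) ℝ)
    (hWB : specNorm W ≤ B) (y : Fin d → ℝ) :
    ∑ g, (W.mulVec y g) ^ 2 ≤ B ^ 2 * ∑ t, (y t) ^ 2 := by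
  classical
  have hbdd : BddAbove {r : ℝ | ∃ xx : Fin d → ℝ, euclNorm xx = 1 ∧ r = euclNorm (W.mulVec xx)} := by
    refine ⟨Real.sqrt (∑ g, ∑ t, W g t ^ 2), ?_⟩
    rintro r ⟨xx, hxx1, rfl⟩
    have hxx2 : ∑ t, xx t ^ 2 = 1 := by
      have h := congrArg (fun s : ℝ => s ^ 2) hxx1
      simpa [euclNorm, Real.sq_sqrt (Finset.sum_nonneg fun t _ => sq_nonneg (xx t))] using h
    rw [euclNorm]
    refine Real.sqrt_le_sqrt (Finset.sum_le_sum fun g _ => ?_)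
    calc (W.mulVec xx g) ^ 2 = (∑ t, W g t * xx t) ^ 2 := rfl
      _ ≤ (∑ t, W g t ^ 2) * (∑ t, xx t ^ 2) := Finset.sum_mul_sq_le_sq_mul_sq _ _ _
      _ = ∑ t, W g t ^ 2 := by rw [hxx2, mul_one]
  by_cases hy : ∑ t, y t ^ 2 = 0
  · have hy0 : y = 0 := by
      funext t
      have := (Finset.sum_eq_zero_iff_of_nonneg (fun t _ => sq_nonneg (y t))).mp hy t
        (Finset.mem_univ t)
      exact (pow_eq_zero_iff two_ne_zero).mp this
    simp [hy0, Matrix.mulVec_zero]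
  · set r := Real.sqrt (∑ t, y t ^ 2) with hr
    have hsnn : (0:ℝ) ≤ ∑ t, y t ^ 2 := Finset.sum_nonneg fun t _ => sq_nonneg _
    have hr0 : 0 < r := Real.sqrt_pos.mpr (lt_of_le_of_ne hsnn (Ne.symm hy))
    have hr2 : r ^ 2 = ∑ t, y t ^ 2 := Real.sq_sqrt hsnn
    have hunit : euclNorm (r⁻¹ • y) = 1 := by
      rw [euclNorm]
      have hs : ∑ t, ((r⁻¹ • y) t) ^ 2 = 1 := by
        simp only [Pi.smul_apply, smul_eq_mul, mul_pow, ← Finset.mul_sum]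
        rw [← hr2]
        field_simp
      rw [hs, Real.sqrt_one]
    have hmem : euclNorm (W.mulVec (r⁻¹ • y)) ∈
        {r : ℝ | ∃ xx : Fin d → ℝ, euclNorm xx = 1 ∧ r = euclNorm (W.mulVec xx)} :=
      ⟨r⁻¹ • y, hunit, rfl⟩
    have hle : euclNorm (W.mulVec (r⁻¹ • y)) ≤ B := le_trans (le_csSup hbdd hmem) hWB
    have h2 : ∑ g, (W.mulVec (r⁻¹ • y) g) ^ 2 ≤ B ^ 2 := by
      have hnn : (0:ℝ) ≤ ∑ g, (W.mulVec (r⁻¹ • y) g) ^ 2 :=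
        Finset.sum_nonneg fun g _ => sq_nonneg _
      calc ∑ g, (W.mulVec (r⁻¹ • y) g) ^ 2
          = (euclNorm (W.mulVec (r⁻¹ • y))) ^ 2 := by rw [euclNorm, Real.sq_sqrt hnn]
        _ ≤ B ^ 2 := pow_le_pow_left₀ (Real.sqrt_nonneg _) hle 2
    have h3 : ∑ g, (W.mulVec (r⁻¹ • y) g) ^ 2 = r⁻¹ ^ 2 * ∑ g, (W.mulVec y g) ^ 2 := by
      rw [Matrix.mulVec_smul]
      simp only [Pi.smul_apply, smul_eq_mul, mul_pow, ← Finset.mul_sum]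
    rw [h3] at h2
    have h4 := mul_le_mul_of_nonneg_left h2 (sq_nonneg r)
    have h5 : r ^ 2 * (r⁻¹ ^ 2 * ∑ g, (W.mulVec y g) ^ 2) = ∑ g, (W.mulVec y g) ^ 2 := by
      field_simp
    rw [h5] at h4
    calc ∑ g, (W.mulVec y g) ^ 2 ≤ r ^ 2 * B ^ 2 := h4
      _ = B ^ 2 * ∑ t, y t ^ 2 := by rw [hr2]; ring

theorem stmt12 (b B bx : ℝ) (hb : 0 < b) (hB : 0 < B) (hbx : 0 < bx)
    (n d m : ℕ) (hn : 1 ≤ n) (hd : 1 ≤ d) (hm : 1 ≤ m)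
    (a : ℕ → ℝ) (ha0 : a 0 = 0) (σ : ℝ → ℝ)
    (hσ : ∀ z : ℝ, |z| ≤ B * bx → HasSum (fun j : ℕ => a j * z ^ j) (σ z))
    (hsum : Summable fun j : ℕ => |a j| * (B * bx) ^ j)
    (x : Fin m → Fin d → ℝ) (hx : ∀ i, euclNorm (x i) ≤ bx) :
    rademacherExp m (fun ε =>
        ⨆ p : {p : (Fin n → ℝ) × Matrix (Fin n) (Fin d) ℝ //
                euclNorm p.1 ≤ b ∧ specNorm p.2 ≤ B},
          (1 / (m : ℝ)) * ∑ i, ε i * ∑ l, p.1.1 l * σ (p.1.2.mulVec (x i) l))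
      ≤ b * (∑' j : ℕ, |a j| * (B * bx) ^ j) / Real.sqrt m := by
  classical
  have hx' : ∀ i, Real.sqrt (∑ t, x i t ^ 2) ≤ bx := fun i => hx i
  have hm0 : (0:ℝ) < m := by exact_mod_cast hm
  have hsm : (0:ℝ) < Real.sqrt m := Real.sqrt_pos.mpr hm0
  haveI hNE : Nonempty {p : (Fin n → ℝ) × Matrix (Fin n) (Fin d) ℝ //
      euclNorm p.1 ≤ b ∧ specNorm p.2 ≤ B} := by
    refine ⟨⟨(0, 0), ?_, ?_⟩⟩
    · simp [euclNorm]
      exact hb.le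
    · refine Real.sSup_le ?_ hB.le
      rintro r ⟨xx, hxx1, rfl⟩
      simp [euclNorm, Matrix.zero_mulVec]
      exact hB.le
  have hpt : ∀ ε : Fin m → ℝ,
      (⨆ p : {p : (Fin n → ℝ) × Matrix (Fin n) (Fin d) ℝ //
                euclNorm p.1 ≤ b ∧ specNorm p.2 ≤ B},
          (1 / (m : ℝ)) * ∑ i, ε i * ∑ l, p.1.1 l * σ (p.1.2.mulVec (x i) l))
        ≤ (1 / (m : ℝ)) * (b * ∑' j : ℕ, |a j| * B ^ j * Svec d m j x ε) := by
    intro ε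
    refine ciSup_le fun p => ?_
    refine mul_le_mul_of_nonneg_left ?_ (by positivity)
    have hu : ∑ l, p.1.1 l ^ 2 ≤ b ^ 2 := by
      have h1 := p.2.1
      calc ∑ l, p.1.1 l ^ 2 = (Real.sqrt (∑ l, p.1.1 l ^ 2)) ^ 2 :=
            (Real.sq_sqrt (Finset.sum_nonneg fun l _ => sq_nonneg _)).symm
        _ ≤ b ^ 2 := pow_le_pow_left₀ (Real.sqrt_nonneg _) h1 2
    exact perEps b B bx hb.le hB.le hbx.le a ha0 σ hσ hsum x hx' ε p.1.1 hu p.1.2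
      (specNorm_bound B hB.le p.1.2 p.2.2)
  set c : (Fin m → Bool) → Fin m → ℝ := fun ε i => if ε i then 1 else -1 with hcdef
  have hsum2 : ∀ ε : Fin m → Bool, Summable (fun j => |a j| * B ^ j * Svec d m j x (c ε)) :=
    fun ε => summable_svec B bx hB.le hbx.le a hsum x hx' (c ε)
  have step1 : rademacherExp m (fun ε =>
        ⨆ p : {p : (Fin n → ℝ) × Matrix (Fin n) (Fin d) ℝ //
                euclNorm p.1 ≤ b ∧ specNorm p.2 ≤ B},
          (1 / (m : ℝ)) * ∑ i, ε i * ∑ l, p.1.1 l * σ (p.1.2.mulVec (x i) l))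
      ≤ (∑ ε : Fin m → Bool,
          (1 / (m : ℝ)) * (b * ∑' j : ℕ, |a j| * B ^ j * Svec d m j x (c ε))) / 2 ^ m := by
    rw [rademacherExp]
    exact div_le_div_of_nonneg_right (Finset.sum_le_sum fun ε _ => hpt (c ε)) (by positivity)
  have step2 : (∑ ε : Fin m → Bool,
        (1 / (m : ℝ)) * (b * ∑' j : ℕ, |a j| * B ^ j * Svec d m j x (c ε)))
      = (1 / (m : ℝ)) * b *
          ∑' j : ℕ, |a j| * B ^ j * ∑ ε : Fin m → Bool, Svec d m j x (c ε) := by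
    rw [← Finset.mul_sum, ← Finset.mul_sum, ← mul_assoc]
    congr 1
    rw [← Summable.tsum_finsetSum (fun ε _ => hsum2 ε)]
    congr 1
    funext j
    rw [Finset.mul_sum]
  have step3 : ∑' j : ℕ, |a j| * B ^ j * ∑ ε : Fin m → Bool, Svec d m j x (c ε)
      ≤ 2 ^ m * Real.sqrt m * ∑' j : ℕ, |a j| * (B * bx) ^ j := by
    have sumL : Summable (fun j => |a j| * B ^ j * ∑ ε : Fin m → Bool, Svec d m j x (c ε)) := by
      refine Summable.congr (summable_sum (s := (Finset.univ : Finset (Fin m → Bool)))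
        (fun ε _ => (hsum2 ε))) ?_
      intro j
      rw [← Finset.mul_sum]
    have sumR : Summable (fun j => |a j| * B ^ j * (2 ^ m * (Real.sqrt m * bx ^ j))) := by
      refine Summable.congr (hsum.mul_left (2 ^ m * Real.sqrt m)) ?_
      intro j
      rw [mul_pow]
      ring
    calc ∑' j : ℕ, |a j| * B ^ j * ∑ ε : Fin m → Bool, Svec d m j x (c ε)
        ≤ ∑' j : ℕ, |a j| * B ^ j * (2 ^ m * (Real.sqrt m * bx ^ j)) := by
          refine Summable.tsum_le_tsum (fun j => ?_) sumL sumR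
          exact mul_le_mul_of_nonneg_left (EStep j bx hbx.le x hx')
            (mul_nonneg (abs_nonneg _) (pow_nonneg hB.le _))
      _ = 2 ^ m * Real.sqrt m * ∑' j : ℕ, |a j| * (B * bx) ^ j := by
          rw [← tsum_mul_left]
          congr 1
          funext j
          rw [mul_pow]
          ring
  have hSnn : 0 ≤ ∑' j : ℕ, |a j| * (B * bx) ^ j :=
    tsum_nonneg fun j => mul_nonneg (abs_nonneg _) (by positivity)
  calc rademacherExp m (fun ε =>
        ⨆ p : {p : (Fin n → ℝ) × Matrix (Fin n) (Fin d) ℝ //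
                euclNorm p.1 ≤ b ∧ specNorm p.2 ≤ B},
          (1 / (m : ℝ)) * ∑ i, ε i * ∑ l, p.1.1 l * σ (p.1.2.mulVec (x i) l))
      ≤ (∑ ε : Fin m → Bool,
          (1 / (m : ℝ)) * (b * ∑' j : ℕ, |a j| * B ^ j * Svec d m j x (c ε))) / 2 ^ m := step1
    _ = (1 / (m : ℝ)) * b *
          (∑' j : ℕ, |a j| * B ^ j * ∑ ε : Fin m → Bool, Svec d m j x (c ε)) / 2 ^ m := by
        rw [step2]
    _ ≤ (1 / (m : ℝ)) * b *
          (2 ^ m * Real.sqrt m * ∑' j : ℕ, |a j| * (B * bx) ^ j) / 2 ^ m := by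
        refine div_le_div_of_nonneg_right ?_ (by positivity)
        exact mul_le_mul_of_nonneg_left step3 (by positivity)
    _ = b * (∑' j : ℕ, |a j| * (B * bx) ^ j) / Real.sqrt m := by
        set S := ∑' j : ℕ, |a j| * (B * bx) ^ j with hSdef
        have hmm : Real.sqrt m * Real.sqrt m = (m:ℝ) := Real.mul_self_sqrt (Nat.cast_nonneg m)
        have h2m : ((2:ℝ)) ^ m ≠ 0 := by positivity
        field_simp
        rw [Real.sq_sqrt (Nat.cast_nonneg m)]
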